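/- If W(φ) \ ↓Z ≠ ∅, then Eigen(σ_{φ,𝔴}, V^Γ) = F \ {0} in case φ(Γ \ Z) = Γ, and Eigen(σ_{φ,𝔴}, V^Γ) = F in case φ(Γ \ Z) ≠ Γ. -/

import Mathlib

open Function Set

/-- The weighted generalized shift `σ_{φ,𝔴}` on `V^Γ`,
sending `(x_α)_α` to `(𝔴_α • x_{φ(α)})_α`. -/
noncomputable def shiftW {F V Γ : Type*} [Field F] [AddCommGroup V] [Module F V]
    (φ : Γ → Γ) (w : Γ → F) : (Γ → V) →ₗ[F] (Γ → V) where
  toFun x := fun α => w α • x (φ α)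
  map_add' x y := by funext α; simp
  map_smul' c x := by
    funext α
    simp only [Pi.smul_apply, RingHom.id_apply]
    rw [smul_comm]

/-- The set of eigenvalues of a linear self-map `T` of `W`:
all `r` such that `T x = r • x` for some nonzero `x`. -/
def Eigen {F W : Type*} [Field F] [AddCommGroup W] [Module F W] (T : W →ₗ[F] W) : Set F :=
  {r | ∃ x : W, x ≠ 0 ∧ T x = r • x}

/-- `↓Z = ⋃_{n ≥ 0} φ^{-n}(Z)` where `Z = {α : 𝔴_α = 0}`. -/
def downZ {F Γ : Type*} [Field F] (φ : Γ → Γ) (w : Γ → F) : Set Γ :=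
  ⋃ n : ℕ, φ^[n] ⁻¹' {α | w α = 0}

/-- Wandering points of `φ`: points `α` such that the sequence `(φ^n(α))_{n ≥ 1}` is injective. -/
def wanderSet {Γ : Type*} (φ : Γ → Γ) : Set Γ :=
  {α | Function.Injective fun n : ℕ => φ^[n + 1] α}


section Aux

variable {F Γ : Type*} [Field F] (φ : Γ → Γ) (w : Γ → F) (r : F) (α₀ : Γ)

/-- candidate value of eigenvector coefficient at `α` from witness `φ^[n] α = φ^[m] α₀`. -/
noncomputable def sval (α : Γ) (n m : ℕ) : F :=
  r ^ ((m : ℤ) - n) * (∏ k ∈ Finset.range n, w (φ^[k] α)) *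
    (∏ k ∈ Finset.range m, w (φ^[k] α₀))⁻¹

lemma sval_succ {α : Γ} {n m : ℕ} (h : φ^[n] α = φ^[m] α₀)
    (hw : w (φ^[m] α₀) ≠ 0) :
    sval φ w r α₀ α (n + 1) (m + 1) = sval φ w r α₀ α n m := by
  unfold sval
  rw [Finset.prod_range_succ, Finset.prod_range_succ, h]
  have he : ((m : ℤ) + 1) - ((n : ℤ) + 1) = (m : ℤ) - n := by ring
  push_cast
  rw [he, mul_inv]
  field_simp

lemma sval_add (hw : ∀ k, w (φ^[k] α₀) ≠ 0) {α : Γ} {n m : ℕ}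
    (h : φ^[n] α = φ^[m] α₀) (d : ℕ) :
    sval φ w r α₀ α (n + d) (m + d) = sval φ w r α₀ α n m := by
  induction d with
  | zero => rfl
  | succ d ih =>
    have hwit : φ^[n + d] α = φ^[m + d] α₀ := by
      rw [add_comm n d, add_comm m d, iterate_add_apply, iterate_add_apply, h]
    rw [show n + (d + 1) = (n + d) + 1 by ring, show m + (d + 1) = (m + d) + 1 by ring,
      sval_succ φ w r α₀ hwit (hw _), ih]

lemma sval_welldef (hw : ∀ k, w (φ^[k] α₀) ≠ 0)
    (hinj : Function.Injective fun m : ℕ => φ^[m] α₀)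
    {α : Γ} {n m n' m' : ℕ} (h : φ^[n] α = φ^[m] α₀) (h' : φ^[n'] α = φ^[m'] α₀) :
    sval φ w r α₀ α n m = sval φ w r α₀ α n' m' := by
  have key : ∀ n m n' m' : ℕ, n ≤ n' → φ^[n] α = φ^[m] α₀ → φ^[n'] α = φ^[m'] α₀ →
      sval φ w r α₀ α n m = sval φ w r α₀ α n' m' := by
    intro n m n' m' hle h h'
    obtain ⟨d, rfl⟩ := Nat.exists_eq_add_of_le hle
    have hm' : m' = m + d := by
      have : φ^[m'] α₀ = φ^[m + d] α₀ := by
        rw [← h', add_comm n d, iterate_add_apply, h, add_comm m d, iterate_add_apply]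
      exact (hinj this.symm).symm ▸ rfl
    subst hm'
    exact (sval_add φ w r α₀ hw h d).symm
  rcases le_total n n' with hle | hle
  · exact key n m n' m' hle h h'
  · exact (key n' m' n m hle h' h).symm

open Classical in
/-- The coefficient function of the eigenvector. -/
noncomputable def gfun (α : Γ) : F :=
  if h : ∃ n m : ℕ, φ^[n] α = φ^[m] α₀ then
    sval φ w r α₀ α h.choose h.choose_spec.choose else 0

lemma gfun_eq (hw : ∀ k, w (φ^[k] α₀) ≠ 0)
    (hinj : Function.Injective fun m : ℕ => φ^[m] α₀)
    {α : Γ} {n m : ℕ} (h : φ^[n] α = φ^[m] α₀) :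
    gfun φ w r α₀ α = sval φ w r α₀ α n m := by
  have hex : ∃ n m : ℕ, φ^[n] α = φ^[m] α₀ := ⟨n, m, h⟩
  rw [gfun, dif_pos hex]
  exact sval_welldef φ w r α₀ hw hinj hex.choose_spec.choose_spec h

lemma gfun_self (hw : ∀ k, w (φ^[k] α₀) ≠ 0)
    (hinj : Function.Injective fun m : ℕ => φ^[m] α₀) :
    gfun φ w r α₀ α₀ = 1 := by
  rw [gfun_eq φ w r α₀ hw hinj (n := 0) (m := 0) rfl, sval]
  simp

lemma gfun_eigen (hr : r ≠ 0) (hw : ∀ k, w (φ^[k] α₀) ≠ 0)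
    (hinj : Function.Injective fun m : ℕ => φ^[m] α₀) (α : Γ) :
    w α * gfun φ w r α₀ (φ α) = r * gfun φ w r α₀ α := by
  by_cases hex : ∃ n m : ℕ, φ^[n] α = φ^[m] α₀
  · obtain ⟨n, m, h⟩ := hex
    have hφ : φ^[n] (φ α) = φ^[m + 1] α₀ := by
      rw [← iterate_succ_apply, iterate_succ_apply', h, iterate_succ_apply']
    rw [gfun_eq φ w r α₀ hw hinj hφ, gfun_eq φ w r α₀ hw hinj h,
      ← sval_succ φ w r α₀ h (hw _)]
    unfold sval
    have hps : ∏ k ∈ Finset.range n, w (φ^[k] (φ α)) =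
        ∏ k ∈ Finset.range n, w (φ^[k + 1] α) := by
      refine Finset.prod_congr rfl fun k _ => ?_
      rw [iterate_succ_apply]
    rw [hps]
    have hpn : ∏ k ∈ Finset.range (n + 1), w (φ^[k] α) =
        (∏ k ∈ Finset.range n, w (φ^[k + 1] α)) * w α := by
      rw [Finset.prod_range_succ']
      simp
    rw [hpn]
    have hz : r ^ (((m : ℤ) + 1) - ((n : ℤ) + 1)) = r ^ ((m : ℤ) - n) := by
      norm_num
    have hz2 : r * r ^ (((m : ℤ) + 1) - ((n : ℤ) + 1)) = r ^ (((m : ℤ) + 1) - n) := by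
      rw [hz, show ((m : ℤ) + 1) - n = ((m : ℤ) - n) + 1 by ring, zpow_add_one₀ hr]
      ring
    push_cast
    rw [← hz2]
    ring
  · have hex' : ¬ ∃ n m : ℕ, φ^[n] (φ α) = φ^[m] α₀ := by
      rintro ⟨n, m, h⟩
      exact hex ⟨n + 1, m, by rw [iterate_succ_apply, h]⟩
    simp only [gfun, dif_neg hex, dif_neg hex', mul_zero]

end Aux

theorem eigen_of_wandering_not_subset_downZ
    {F V Γ : Type*} [Field F] [AddCommGroup V] [Module F V] [Nonempty Γ] [Nontrivial V]
    (φ : Γ → Γ) (w : Γ → F) (h : (wanderSet φ \ downZ φ w).Nonempty) :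
    (φ '' {α : Γ | w α ≠ 0} = Set.univ →
      Eigen (shiftW (V := V) φ w) = {r : F | r ≠ 0}) ∧
    (φ '' {α : Γ | w α ≠ 0} ≠ Set.univ →
      Eigen (shiftW (V := V) φ w) = (Set.univ : Set F)) := by
  obtain ⟨α₀, hwand, hdz⟩ := h
  obtain ⟨v, hv⟩ := exists_ne (0 : V)
  -- the weights along the forward orbit of α₀ are nonzero
  have hw : ∀ k : ℕ, w (φ^[k] α₀) ≠ 0 := by
    intro k hk
    exact hdz (Set.mem_iUnion.2 ⟨k, hk⟩)
  -- injectivity of m ↦ φ^[m] α₀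
  have hinj : Function.Injective fun m : ℕ => φ^[m] α₀ := by
    intro a b hab
    have : (fun n : ℕ => φ^[n + 1] α₀) a = (fun n : ℕ => φ^[n + 1] α₀) b := by
      simp only [iterate_succ_apply']
      simp only at hab
      rw [hab]
    exact hwand this
  -- every nonzero r is an eigenvalue
  have hnonzero : ∀ r : F, r ≠ 0 → r ∈ Eigen (shiftW (V := V) φ w) := by
    intro r hr
    refine ⟨fun α => gfun φ w r α₀ α • v, ?_, ?_⟩
    · intro hx
      have := congrFun hx α₀
      rw [gfun_self φ w r α₀ hw hinj, one_smul] at this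
      exact hv this
    · funext α
      show w α • (gfun φ w r α₀ (φ α) • v) = r • (gfun φ w r α₀ α • v)
      rw [smul_smul, smul_smul, gfun_eigen φ w r α₀ hr hw hinj α]
  constructor
  · -- surjective case : eigenvalues = nonzero scalars
    intro hsurj
    ext r
    simp only [Set.mem_setOf_eq]
    constructor
    · rintro ⟨x, hx, hxe⟩ rfl
      apply hx
      funext β
      have hβ : β ∈ φ '' {α : Γ | w α ≠ 0} := hsurj ▸ Set.mem_univ β
      obtain ⟨α, hα, rfl⟩ := hβ
      have := congrFun hxe α
      simp only [zero_smul, Pi.zero_apply] at this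
      have h2 : w α • x (φ α) = 0 := this
      rcases smul_eq_zero.1 h2 with h3 | h3
      · exact absurd h3 hα
      · exact h3
    · exact hnonzero r
  · -- non-surjective case : every scalar is an eigenvalue
    intro hns
    ext r
    simp only [Set.mem_univ, iff_true]
    rcases eq_or_ne r 0 with rfl | hr
    · -- 0 is an eigenvalue
      obtain ⟨β, hβ⟩ : ∃ β : Γ, β ∉ φ '' {α : Γ | w α ≠ 0} := by
        by_contra hc
        push_neg at hc
        exact hns (Set.eq_univ_of_forall hc)
      classical
      refine ⟨fun γ => if γ = β then v else 0, ?_, ?_⟩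
      · intro hx
        have := congrFun hx β
        simp only [if_pos rfl, Pi.zero_apply] at this
        exact hv this
      · funext α
        show w α • (if φ α = β then v else 0) = (0 : F) • _
        rw [zero_smul]
        by_cases hφα : φ α = β
        · rw [if_pos hφα]
          have hwα : w α = 0 := by
            by_contra hwα
            exact hβ ⟨α, hwα, hφα⟩
          rw [hwα, zero_smul]
        · rw [if_neg hφα, smul_zero]
    · exact hnonzero r hr
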